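/- Under the CTRW setup, define the continuous-path CTRW by X̄(t) = S(N(t)) + ((S(N(t)+1) − S(N(t)))/(T(N(t)+1) − T(N(t))))·(t − T(N(t))). Then X̄(t) = f(X)(t) for every t ≥ 0, where X(t) = S(N(t)) is the CTRW path; in particular X̄ has continuous trajectories given by the broken line through the points (T(k), S(k)). -/

import Mathlib

open scoped NNReal ENNReal Classical
open Filter Topology

noncomputable section

/-- Left limit of `x` at `t`, with the convention `x(0−) = x(0)`. -/
def leftLimit {d : ℕ} (x : ℝ≥0 → Fin d → ℝ) (t : ℝ≥0) : Fin d → ℝ :=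
  if 0 < t then limUnder (nhdsWithin t (Set.Iio t)) x else x 0

/-- `x : [0,∞) → ℝ^d` is càdlàg: right-continuous everywhere, with left limits at every `t > 0`. -/
def IsCadlag {d : ℕ} (x : ℝ≥0 → Fin d → ℝ) : Prop :=
  (∀ t : ℝ≥0, ContinuousWithinAt x (Set.Ici t) t) ∧
  (∀ t : ℝ≥0, 0 < t →
    ∃ L : Fin d → ℝ, Filter.Tendsto x (nhdsWithin t (Set.Iio t)) (nhds L))

/-- `x` is constant on the set `I`. -/
def ConstOn {d : ℕ} (x : ℝ≥0 → Fin d → ℝ) (I : Set ℝ≥0) : Prop :=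
  ∀ s ∈ I, ∀ s' ∈ I, x s = x s'

/-- `η_x(t) = sup {s ∈ [0,t) : x(s) ≠ x(t)}`, with the convention `sup ∅ = 0`. -/
def eta {d : ℕ} (x : ℝ≥0 → Fin d → ℝ) (t : ℝ≥0) : ℝ≥0 :=
  sSup {s : ℝ≥0 | s < t ∧ x s ≠ x t}

/-- The set of discontinuity points of `x`: the `t > 0` where `x(t) ≠ x(t−)`. -/
def disc {d : ℕ} (x : ℝ≥0 → Fin d → ℝ) : Set ℝ≥0 :=
  {t : ℝ≥0 | 0 < t ∧ x t ≠ leftLimit x t}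

/-- `θ_x(t) = inf {s ≥ t : x(s) ≠ x(t−)} ∈ [0,∞]`, with the convention `inf ∅ = ∞`. -/
def theta {d : ℕ} (x : ℝ≥0 → Fin d → ℝ) (t : ℝ≥0) : ℝ≥0∞ :=
  sInf ((fun s : ℝ≥0 => (s : ℝ≥0∞)) '' {s : ℝ≥0 | t ≤ s ∧ x s ≠ leftLimit x t})

/-- The map `f` replacing each "stair" of `x` by the linear interpolation of its endpoints:
`f(x)(t) = x(η_x(t)) + ((t − η_x(t))/(θ_x(t) − η_x(t))) • (x(θ_x(t)) − x(η_x(t)))`,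
with `f(x)(t) = x(t)` when `θ_x(t) = η_x(t)` or `θ_x(t) = ∞`. -/
def fmap {d : ℕ} (x : ℝ≥0 → Fin d → ℝ) : ℝ≥0 → Fin d → ℝ := fun t =>
  if theta x t = ((eta x t : ℝ≥0) : ℝ≥0∞) ∨ theta x t = ⊤ then x t
  else x (eta x t) +
    (((t : ℝ) - (eta x t : ℝ)) / ((theta x t).toReal - (eta x t : ℝ))) •
      (x (theta x t).toNNReal - x (eta x t))

/-- The space `D` of càdlàg functions `[0,∞) → ℝ^d`. -/
def Cadlag (d : ℕ) : Type := {x : ℝ≥0 → Fin d → ℝ // IsCadlag x}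

/-- The Kolmogorov σ-algebra on `D`: the trace of the σ-algebra generated by the coordinate
evaluation maps `x ↦ x(t)`, `t ≥ 0` (i.e. of the product σ-algebra). -/
instance (d : ℕ) : MeasurableSpace (Cadlag d) :=
  MeasurableSpace.comap (fun x : Cadlag d => x.1)
    (inferInstance : MeasurableSpace (ℝ≥0 → Fin d → ℝ))

/-- Under the CTRW setup, the continuous-path CTRW
`X̄(t) = S(N(t)) + ((t − T(N(t)))/(T(N(t)+1) − T(N(t)))) • (S(N(t)+1) − S(N(t)))`
satisfies `X̄ = f(X)` pointwise; in particular `X̄` is continuous and its trajectory is the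
broken line through the points `(T(k), S(k))`. -/
theorem cpctrw_eq_fmap (d : ℕ) (hd : 1 ≤ d)
    (Y : ℕ → Fin d → ℝ) (hY : ∀ k : ℕ, Y k ≠ 0)
    (J : ℕ → ℝ≥0) (hJ : ∀ k : ℕ, 0 < J k)
    (T : ℕ → ℝ≥0) (hT : ∀ n : ℕ, T n = ∑ k ∈ Finset.range n, J k)
    (hdiv : Filter.Tendsto T Filter.atTop Filter.atTop)
    (N : ℝ≥0 → ℕ) (hN : ∀ t : ℝ≥0, N t = sSup {k : ℕ | T k ≤ t})
    (S : ℕ → Fin d → ℝ) (hS : ∀ n : ℕ, S n = ∑ k ∈ Finset.range n, Y k)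
    (X : ℝ≥0 → Fin d → ℝ) (hX : ∀ t : ℝ≥0, X t = S (N t))
    (Xbar : ℝ≥0 → Fin d → ℝ)
    (hXbar : ∀ t : ℝ≥0, Xbar t = S (N t) +
      (((t : ℝ) - (T (N t) : ℝ)) / ((T (N t + 1) : ℝ) - (T (N t) : ℝ))) •
        (S (N t + 1) - S (N t))) :
    (∀ t : ℝ≥0, Xbar t = fmap X t) ∧
    Continuous Xbar ∧
    ∀ k : ℕ, ∀ t ∈ Set.Icc (T k) (T (k + 1)),
      Xbar t = S k +
        (((t : ℝ) - (T k : ℝ)) / ((T (k + 1) : ℝ) - (T k : ℝ))) • (S (k + 1) - S k) := by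
  have hT0 : T 0 = 0 := by simp [hT]
  have hTsucc : ∀ n, T (n + 1) = T n + J n := fun n => by
    simp [hT, Finset.sum_range_succ]
  have hTmono : StrictMono T := strictMono_nat_of_lt_succ fun n => by
    rw [hTsucc]; exact lt_add_of_pos_right _ (hJ n)
  have hSsucc : ∀ n, S (n + 1) = S n + Y n := fun n => by
    simp [hS, Finset.sum_range_succ]
  have hSne : ∀ n, S (n + 1) ≠ S n := by
    intro n h
    apply hY n
    have h2 := hSsucc n
    rw [h] at h2
    exact (left_eq_add.mp h2)
  have hNt : ∀ (t : ℝ≥0) (k : ℕ), T k ≤ t → t < T (k + 1) → N t = k := by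
    intro t k h1 h2
    rw [hN]
    refine IsGreatest.csSup_eq ⟨h1, fun j hj => ?_⟩
    by_contra hjk
    push_neg at hjk
    exact absurd hj (not_le.mpr (lt_of_lt_of_le h2 (hTmono.monotone (Nat.succ_le_of_lt hjk))))
  have hNex : ∀ t : ℝ≥0, ∃ k, T k ≤ t ∧ t < T (k + 1) := by
    intro t
    have hbig : ∃ n, t < T n := by
      rcases (Filter.tendsto_atTop.mp hdiv (t + 1)).exists with ⟨n, hn⟩
      exact ⟨n, lt_of_lt_of_le (lt_add_of_pos_right t one_pos) hn⟩
    have hm : t < T (Nat.find hbig) := Nat.find_spec hbig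
    have hm0 : Nat.find hbig ≠ 0 := by
      intro h
      rw [h, hT0] at hm
      exact absurd hm (not_lt.mpr zero_le)
    obtain ⟨k, hk⟩ := Nat.exists_eq_succ_of_ne_zero hm0
    rw [hk] at hm
    refine ⟨k, ?_, hm⟩
    exact not_lt.mp (Nat.find_min hbig (by rw [hk]; exact Nat.lt_succ_self k))
  have hXval : ∀ (k : ℕ) (t : ℝ≥0), T k ≤ t → t < T (k + 1) → X t = S k :=
    fun k t h1 h2 => by rw [hX, hNt t k h1 h2]
  have hXT : ∀ k : ℕ, X (T k) = S k :=
    fun k => hXval k (T k) le_rfl (hTmono (Nat.lt_succ_self k))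
  have heta : ∀ (k : ℕ) (t : ℝ≥0), T k ≤ t → t < T (k + 1) → eta X t = T k := by
    intro k t h1 h2
    have hxt : X t = S k := hXval k t h1 h2
    have hsub : {s : ℝ≥0 | s < t ∧ X s ≠ X t} ⊆ Set.Iio (T k) := by
      intro s hs
      by_contra hge
      simp only [Set.mem_Iio, not_lt] at hge
      exact hs.2 (by rw [hXval k s hge (lt_trans hs.1 h2), hxt])
    rcases Nat.eq_zero_or_pos k with hk0 | hkpos
    · subst hk0
      have hemp : {s : ℝ≥0 | s < t ∧ X s ≠ X t} = ∅ := by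
        ext s
        simp only [Set.mem_setOf_eq, Set.mem_empty_iff_false, iff_false, not_and, not_not]
        intro hst
        rw [hXval 0 s (by rw [hT0]; exact zero_le) (lt_trans hst h2), hxt]
      simp only [eta]
      rw [hemp, csSup_empty, hT0]
      rfl
    · obtain ⟨m, rfl⟩ := Nat.exists_eq_succ_of_ne_zero (Nat.pos_iff_ne_zero.mp hkpos)
      have hIco : Set.Ico (T m) (T (m + 1)) ⊆ {s : ℝ≥0 | s < t ∧ X s ≠ X t} := by
        intro s hs
        refine ⟨lt_of_lt_of_le hs.2 h1, ?_⟩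
        rw [hXval m s hs.1 hs.2, hxt]
        exact (hSne m).symm
      have hbdd : BddAbove {s : ℝ≥0 | s < t ∧ X s ≠ X t} :=
        ⟨T (m + 1), fun s hs => le_of_lt (hsub hs)⟩
      simp only [eta]
      refine le_antisymm ?_ ?_
      · exact csSup_le (Set.nonempty_of_mem (hIco ⟨le_rfl, hTmono (Nat.lt_succ_self m)⟩))
          (fun s hs => le_of_lt (hsub hs))
      · calc T (m + 1) = sSup (Set.Ico (T m) (T (m + 1))) :=
              (csSup_Ico (hTmono (Nat.lt_succ_self m))).symm
          _ ≤ _ := csSup_le_csSup hbdd ⟨T m, le_rfl, hTmono (Nat.lt_succ_self m)⟩ hIco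
  have hLL : ∀ (k : ℕ) (t : ℝ≥0), T k < t → t ≤ T (k + 1) → leftLimit X t = S k := by
    intro k t h1 h2
    have ht0 : 0 < t := lt_of_le_of_lt zero_le h1
    have hnb : (nhdsWithin t (Set.Iio t)).NeBot := nhdsWithin_Iio_self_neBot' ⟨0, ht0⟩
    simp only [leftLimit, if_pos ht0]
    refine Filter.Tendsto.limUnder_eq ?_
    have hmem : Set.Ioo (T k) t ∈ nhdsWithin t (Set.Iio t) := by
      rw [← Set.Ioi_inter_Iio]
      exact Filter.inter_mem (nhdsWithin_le_nhds (isOpen_Ioi.mem_nhds h1)) self_mem_nhdsWithin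
    refine Filter.Tendsto.congr' ?_ tendsto_const_nhds
    filter_upwards [hmem] with s hs
    exact (hXval k s (le_of_lt hs.1) (lt_of_lt_of_le hs.2 h2)).symm
  have hLL0 : leftLimit X 0 = X 0 := by
    simp only [leftLimit, if_neg (lt_irrefl (0 : ℝ≥0))]
  have hthetaB : ∀ (k : ℕ) (t : ℝ≥0), T k ≤ t → t < T (k + 1) → leftLimit X t = S k →
      theta X t = ((T (k + 1) : ℝ≥0) : ℝ≥0∞) := by
    intro k t h1 h2 hL
    simp only [theta, hL]
    refine le_antisymm ?_ ?_
    · exact sInf_le ⟨T (k + 1), ⟨le_of_lt h2, by rw [hXT (k + 1)]; exact hSne k⟩, rfl⟩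
    · refine le_sInf ?_
      rintro x ⟨s, ⟨hs1, hs2⟩, rfl⟩
      by_contra hlt
      push_neg at hlt
      have hs' : s < T (k + 1) := by exact_mod_cast hlt
      exact hs2 (hXval k s (le_trans h1 hs1) hs')
  have hthetaJ : ∀ t : ℝ≥0, X t ≠ leftLimit X t → theta X t = (t : ℝ≥0∞) := by
    intro t h
    simp only [theta]
    refine le_antisymm (sInf_le ⟨t, ⟨le_rfl, h⟩, rfl⟩) (le_sInf ?_)
    rintro x ⟨s, ⟨hs1, _⟩, rfl⟩
    exact ENNReal.coe_le_coe.mpr hs1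
  have key : ∀ (k : ℕ) (t : ℝ≥0), T k ≤ t → t < T (k + 1) →
      fmap X t = S k +
        (((t : ℝ) - (T k : ℝ)) / ((T (k + 1) : ℝ) - (T k : ℝ))) • (S (k + 1) - S k) := by
    intro k t h1 h2
    have he : eta X t = T k := heta k t h1 h2
    have hxt : X t = S k := hXval k t h1 h2
    by_cases hjump : T k = t ∧ 0 < k
    · obtain ⟨heq, hkpos⟩ := hjump
      obtain ⟨m, rfl⟩ := Nat.exists_eq_succ_of_ne_zero (Nat.pos_iff_ne_zero.mp hkpos)
      have hL : leftLimit X t = S m :=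
        hLL m t (heq ▸ hTmono (Nat.lt_succ_self m)) heq.ge
      have hth : theta X t = (t : ℝ≥0∞) :=
        hthetaJ t (by rw [hxt, hL]; exact hSne m)
      have hcond : theta X t = ((eta X t : ℝ≥0) : ℝ≥0∞) ∨ theta X t = ⊤ :=
        Or.inl (by rw [hth, he, heq])
      simp only [fmap]
      rw [if_pos hcond, hxt, ← heq, sub_self, zero_div, zero_smul, add_zero]
    · have hL : leftLimit X t = S k := by
        rcases eq_or_lt_of_le h1 with heq | hlt
        · have hk0 : k = 0 := by
            by_contra h
            exact hjump ⟨heq, Nat.pos_of_ne_zero h⟩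
          subst hk0
          have ht0 : t = 0 := by rw [← heq, hT0]
          rw [ht0, hLL0, ← ht0, hxt]
        · exact hLL k t hlt h2.le
      have hth := hthetaB k t h1 h2 hL
      have hcond : ¬(theta X t = ((eta X t : ℝ≥0) : ℝ≥0∞) ∨ theta X t = ⊤) := by
        rw [hth, he]
        push_neg
        refine ⟨?_, ENNReal.coe_ne_top⟩
        intro hc
        exact (ne_of_gt (hTmono (Nat.lt_succ_self k))) (by exact_mod_cast hc)
      simp only [fmap]
      rw [if_neg hcond, he, hth, ENNReal.coe_toReal, ENNReal.toNNReal_coe, hXT, hXT]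
  have part1 : ∀ t : ℝ≥0, Xbar t = fmap X t := by
    intro t
    obtain ⟨k, h1, h2⟩ := hNex t
    rw [hXbar t, hNt t k h1 h2, key k t h1 h2]
  have part3 : ∀ k : ℕ, ∀ t ∈ Set.Icc (T k) (T (k + 1)),
      Xbar t = S k +
        (((t : ℝ) - (T k : ℝ)) / ((T (k + 1) : ℝ) - (T k : ℝ))) • (S (k + 1) - S k) := by
    intro k t ht
    obtain ⟨h1, h2⟩ := ht
    rcases lt_or_eq_of_le h2 with h2' | h2'
    · rw [hXbar t, hNt t k h1 h2']
    · subst h2'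
      rw [hXbar, hNt (T (k + 1)) (k + 1) le_rfl (hTmono (Nat.lt_succ_self (k + 1))),
        sub_self, zero_div, zero_smul, add_zero]
      have hne : ((T (k + 1) : ℝ) - (T k : ℝ)) ≠ 0 := by
        have hlt : (T k : ℝ) < (T (k + 1) : ℝ) := by
          exact_mod_cast hTmono (Nat.lt_succ_self k)
        linarith
      rw [div_self hne, one_smul]
      abel
  have hg : ∀ k : ℕ, Continuous (fun t : ℝ≥0 => S k +
      (((t : ℝ) - (T k : ℝ)) / ((T (k + 1) : ℝ) - (T k : ℝ))) • (S (k + 1) - S k)) := by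
    intro k
    exact continuous_const.add
      (((NNReal.continuous_coe.sub continuous_const).div_const _).smul continuous_const)
  have part2 : Continuous Xbar := by
    rw [continuous_iff_continuousAt]
    intro t
    obtain ⟨k, h1, h2⟩ := hNex t
    rcases eq_or_lt_of_le h1 with heq | hlt
    · have hr : ContinuousWithinAt Xbar (Set.Ici t) t := by
        refine ((hg k).continuousAt.continuousWithinAt).congr_of_eventuallyEq ?_ ?_
        · filter_upwards [nhdsWithin_le_nhds (isOpen_Iio.mem_nhds h2),
            self_mem_nhdsWithin] with s hs1 hs2
          exact part3 k s ⟨le_trans h1 hs2, le_of_lt hs1⟩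
        · exact part3 k t ⟨h1, h2.le⟩
      have hl : ContinuousWithinAt Xbar (Set.Iic t) t := by
        rcases Nat.eq_zero_or_pos k with hk0 | hkpos
        · subst hk0
          have ht0 : t = 0 := by rw [← heq, hT0]
          refine hr.mono ?_
          intro s _
          rw [ht0]
          exact (zero_le : (0 : ℝ≥0) ≤ s)
        · obtain ⟨m, rfl⟩ := Nat.exists_eq_succ_of_ne_zero (Nat.pos_iff_ne_zero.mp hkpos)
          refine ((hg m).continuousAt.continuousWithinAt).congr_of_eventuallyEq ?_ ?_
          · filter_upwards [nhdsWithin_le_nhds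
              (isOpen_Ioi.mem_nhds (heq ▸ hTmono (Nat.lt_succ_self m))),
              self_mem_nhdsWithin] with s hs1 hs2
            exact part3 m s ⟨le_of_lt hs1, le_trans hs2 heq.ge⟩
          · exact part3 m t ⟨(heq ▸ hTmono (Nat.lt_succ_self m)).le, heq.ge⟩
      exact continuousAt_iff_continuous_left_right.mpr ⟨hl, hr⟩
    · refine ((hg k).continuousAt).congr ?_
      have hmem : Set.Ioo (T k) (T (k + 1)) ∈ nhds t := isOpen_Ioo.mem_nhds ⟨hlt, h2⟩
      filter_upwards [hmem] with s hs
      exact (part3 k s ⟨hs.1.le, hs.2.le⟩).symm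
  exact ⟨part1, part2, part3⟩
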